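/- The subgroup H = ⟨x_0, x_1 x_2 x_1^{-1}⟩ of F is a proper subgroup (in particular x_1 ∉ H); moreover H does not stabilize any point of (0,1) (for every α ∈ (0,1) there exists h ∈ H with h(α) ≠ α), and H·[F,F] = F, i.e. the image of H in the abelianization F/[F,F] is all of F/[F,F]. -/

import Mathlib

set_option maxHeartbeats 1000000

noncomputable section

/-- The unit interval `[0,1]` as a type. -/
abbrev I : Type := Set.Icc (0:ℝ) 1

/-- The underlying function of the generator `x₀` of Thompson's group `F`. -/
def x0fun (t : ℝ) : ℝ := if t ≤ 1/4 then 2*t else if t ≤ 1/2 then t + 1/4 else t/2 + 1/2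

/-- The inverse of `x0fun`. -/
def x0inv (t : ℝ) : ℝ := if t ≤ 1/2 then t/2 else if t ≤ 3/4 then t - 1/4 else 2*t - 1

/-- The underlying function of the generator `x₁` of Thompson's group `F`. -/
def x1fun (t : ℝ) : ℝ :=
  if t ≤ 1/2 then t else if t ≤ 5/8 then 2*t - 1/2 else if t ≤ 3/4 then t + 1/8 else t/2 + 1/2

/-- The inverse of `x1fun`. -/
def x1inv (t : ℝ) : ℝ :=
  if t ≤ 1/2 then t else if t ≤ 3/4 then t/2 + 1/4 else if t ≤ 7/8 then t - 1/8 else 2*t - 1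

/-- The generator `x₀` of Thompson's group `F`, as a bijection of `[0,1]`. -/
def x₀ : Equiv.Perm I where
  toFun t := ⟨x0fun t.1, by
    obtain ⟨h0, h1⟩ := Set.mem_Icc.mp t.2
    simp only [Set.mem_Icc, x0fun]
    split_ifs <;> constructor <;> linarith⟩
  invFun t := ⟨x0inv t.1, by
    obtain ⟨h0, h1⟩ := Set.mem_Icc.mp t.2
    simp only [Set.mem_Icc, x0inv]
    split_ifs <;> constructor <;> linarith⟩
  left_inv t := by
    obtain ⟨h0, h1⟩ := Set.mem_Icc.mp t.2
    apply Subtype.ext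
    show x0inv (x0fun t.1) = t.1
    simp only [x0fun, x0inv]
    split_ifs <;> linarith
  right_inv t := by
    obtain ⟨h0, h1⟩ := Set.mem_Icc.mp t.2
    apply Subtype.ext
    show x0fun (x0inv t.1) = t.1
    simp only [x0fun, x0inv]
    split_ifs <;> linarith

/-- The generator `x₁` of Thompson's group `F`, as a bijection of `[0,1]`. -/
def x₁ : Equiv.Perm I where
  toFun t := ⟨x1fun t.1, by
    obtain ⟨h0, h1⟩ := Set.mem_Icc.mp t.2
    simp only [Set.mem_Icc, x1fun]
    split_ifs <;> constructor <;> linarith⟩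
  invFun t := ⟨x1inv t.1, by
    obtain ⟨h0, h1⟩ := Set.mem_Icc.mp t.2
    simp only [Set.mem_Icc, x1inv]
    split_ifs <;> constructor <;> linarith⟩
  left_inv t := by
    obtain ⟨h0, h1⟩ := Set.mem_Icc.mp t.2
    apply Subtype.ext
    show x1inv (x1fun t.1) = t.1
    simp only [x1fun, x1inv]
    split_ifs <;> linarith
  right_inv t := by
    obtain ⟨h0, h1⟩ := Set.mem_Icc.mp t.2
    apply Subtype.ext
    show x1fun (x1inv t.1) = t.1
    simp only [x1fun, x1inv]
    split_ifs <;> linarith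

/-- Composition in Thompson's group `F` is from left to right: the product `f·g` in the paper
is the function `t ↦ g (f t)`.  In Lean, `Equiv.Perm` multiplication is composition from right
to left: `(f * g) t = f (g t)`.  Hence a paper product `a₁ a₂ ⋯ aₙ` corresponds to the Lean
product `aₙ * ⋯ * a₂ * a₁`.

`x i` is the standard generator `x_i` of Thompson's group `F`: here `x_0, x_1` are the explicit
piecewise-linear maps, and for `i ≥ 1`, `x_{i+1} = x_0^{-i} x_1 x_0^{i}` (left-to-right
composition), which in Lean's convention is `x₀ ^ i * x₁ * (x₀ ^ i)⁻¹`. -/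
def x (i : ℕ) : Equiv.Perm I := if i = 0 then x₀ else x₀ ^ (i-1) * x₁ * (x₀ ^ (i-1))⁻¹

/-- Thompson's group `F`, realized as the group of increasing piecewise-linear homeomorphisms of
`[0,1]` with dyadic breakpoints and slopes powers of 2; it is generated by `x_0` and `x_1`. -/
def F : Subgroup (Equiv.Perm I) := Subgroup.closure {x 0, x 1}

/-- The subgroup `G = ⟨x_0x_2, x_1x_2⟩` of `F` (products written left-to-right, so
`x_0x_2` is the Lean element `x 2 * x 0`). -/
def G : Subgroup (Equiv.Perm I) := Subgroup.closure {x 2 * x 0, x 2 * x 1}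

/-- Jones' subgroup `F⃗ = ⟨x_0x_1, x_1x_2, x_2x_3⟩` of `F` (products written left-to-right). -/
def JonesF : Subgroup (Equiv.Perm I) := Subgroup.closure {x 1 * x 0, x 2 * x 1, x 3 * x 2}

lemma x_mem_F (i : ℕ) : x i ∈ F := by
  have h0 : x 0 ∈ F := Subgroup.subset_closure (by simp)
  have h1 : x 1 ∈ F := Subgroup.subset_closure (by simp)
  have hx0 : x₀ ∈ F := by simpa [x] using h0
  have hx1 : x₁ ∈ F := by simpa [x] using h1
  rcases Nat.eq_zero_or_pos i with h | h
  · subst h; exact h0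
  · have : x i = x₀ ^ (i-1) * x₁ * (x₀ ^ (i-1))⁻¹ := by
      simp [x, Nat.pos_iff_ne_zero.mp h]
    rw [this]
    exact mul_mem (mul_mem (pow_mem hx0 _) hx1) (inv_mem (pow_mem hx0 _))

lemma y0_mem_G : x 2 * x 0 ∈ G := Subgroup.subset_closure (by simp)

lemma y1_mem_G : x 2 * x 1 ∈ G := Subgroup.subset_closure (by simp)

/-- The length `|w|` of an element of `F`: the minimal `n` such that `w` is a product of `n`
elements of `{x_i^{±1} : i ≥ 0}`.  This equals the length of the normal form of `w`. -/
def len (w : Equiv.Perm I) : ℕ :=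
  sInf {n | ∃ l : List (Equiv.Perm I), l.length = n ∧
    (∀ a ∈ l, ∃ i : ℕ, a = x i ∨ a = (x i)⁻¹) ∧ l.prod = w}

/-- The element of `F` given by the positive word `x_{i_1} x_{i_2} ⋯ x_{i_n}` (composition from
left to right), where `l = [i_1, i_2, …, i_n]`.  Since Lean's multiplication of permutations is
composition from right to left, this is the Lean product of the reversed list of letters. -/
def pp (l : List ℕ) : Equiv.Perm I := ((l.map x).reverse).prod

/-- `l = [i_1, …, i_n]` encodes a *block*: a positive normal form `x_{i_1}⋯x_{i_n}`
(so `i_1 ≤ ⋯ ≤ i_n`) with `i_1 ≠ i_n` and `i_j < i_1 + j` for all `j = 1, …, n`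
(here with 0-based indexing: `l[k] < l[0] + k + 1`). -/
def IsBlock (l : List ℕ) : Prop :=
  l ≠ [] ∧ l.Pairwise (· ≤ ·) ∧ l.headI ≠ l.getLastD 0 ∧
    ∀ k < l.length, l.getD k 0 < l.headI + k + 1

/-- The double coset `F⃗ a F⃗` of Jones' subgroup.  (As a set this does not depend on the
composition convention, since `u, v` range over all of `F⃗`.) -/
def dCoset (a : Equiv.Perm I) : Set (Equiv.Perm I) :=
  {w | ∃ u ∈ JonesF, ∃ v ∈ JonesF, w = v * a * u}

/-- A real number is dyadic if it has the form `a / 2^n` with `a, n` natural numbers. -/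
def IsDyadic (α : ℝ) : Prop := ∃ (a : ℕ) (n : ℕ), α = a / 2^n

/-- The subgroup of all permutations fixing every point of `U`. -/
def fixing (U : Set ℝ) : Subgroup (Equiv.Perm I) where
  carrier := {g | ∀ t : I, (t : ℝ) ∈ U → g t = t}
  one_mem' := fun _ _ => rfl
  mul_mem' := by
    intro a b ha hb t ht
    simp only [Equiv.Perm.mul_apply]
    rw [hb t ht, ha t ht]
  inv_mem' := by
    intro a ha t ht
    conv_lhs => rw [← ha t ht]
    exact a.symm_apply_apply t

/-- `H_U`: the stabilizer in `F` of the finite set `U ⊂ (0,1)`, i.e. the subgroup of all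
elements of `F` fixing every point of `U`. -/
def HU (U : Set ℝ) : Subgroup (Equiv.Perm I) := F ⊓ fixing U

/-- The subgroup `H = ⟨x_0, x_1 x_2 x_1⁻¹⟩` of `F` (paper words are left-to-right, so
`x_1 x_2 x_1⁻¹` is the Lean element `(x 1)⁻¹ * x 2 * x 1`). -/
def H15 : Subgroup (Equiv.Perm I) := Subgroup.closure {x 0, (x 1)⁻¹ * x 2 * x 1}


/-- `DyN n t`: `t` is a dyadic rational with denominator dividing `2^n`. -/
def DyN (n : ℕ) (t : ℝ) : Prop := ∃ a : ℤ, 2^n * t = a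

/-- `Dy t`: `t` is a dyadic rational in the open interval `(0,1)`. -/
def Dy (t : ℝ) : Prop := 0 < t ∧ t < 1 ∧ ∃ n, DyN n t

/-- Fuel-indexed recursion computing the mod-2 potential function. -/
noncomputable def φaux : ℕ → ℝ → ZMod 2
  | 0, _ => 0
  | n+1, t =>
    if t ≤ 1/4 then φaux n (2*t) + 1
    else if t ≤ 3/8 then 0
    else if t ≤ 7/16 then φaux n (2*t - 3/8) + 1
    else if t < 1/2 then φaux n (4*t - 3/2)
    else if t ≤ 1/2 then 0
    else if t ≤ 5/8 then 0
    else if t ≤ 11/16 then φaux n (2*t - 7/8) + 1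
    else if t < 3/4 then φaux n (4*t - 5/2)
    else if t ≤ 3/4 then 0
    else φaux n (2*t - 1) + 1

lemma φaux_1 {n : ℕ} {t : ℝ} (h : t ≤ 1/4) : φaux (n+1) t = φaux n (2*t) + 1 := by
  simp only [φaux]; rw [if_pos h]

lemma φaux_2 {n : ℕ} {t : ℝ} (h1 : 1/4 < t) (h2 : t ≤ 3/8) : φaux (n+1) t = 0 := by
  simp only [φaux]; rw [if_neg (by linarith), if_pos h2]

lemma φaux_3 {n : ℕ} {t : ℝ} (h1 : 3/8 < t) (h2 : t ≤ 7/16) :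
    φaux (n+1) t = φaux n (2*t - 3/8) + 1 := by
  simp only [φaux]; rw [if_neg (by linarith), if_neg (by linarith), if_pos h2]

lemma φaux_4 {n : ℕ} {t : ℝ} (h1 : 7/16 < t) (h2 : t < 1/2) :
    φaux (n+1) t = φaux n (4*t - 3/2) := by
  simp only [φaux]
  rw [if_neg (by linarith), if_neg (by linarith), if_neg (by linarith), if_pos h2]

lemma φaux_5 {n : ℕ} : φaux (n+1) (1/2 : ℝ) = 0 := by
  simp only [φaux]
  rw [if_neg (by norm_num), if_neg (by norm_num), if_neg (by norm_num),
    if_neg (by norm_num), if_pos (le_refl _)]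

lemma φaux_6 {n : ℕ} {t : ℝ} (h1 : 1/2 < t) (h2 : t ≤ 5/8) : φaux (n+1) t = 0 := by
  simp only [φaux]
  rw [if_neg (by linarith), if_neg (by linarith), if_neg (by linarith),
    if_neg (not_lt.mpr (by linarith)), if_neg (by linarith), if_pos h2]

lemma φaux_7 {n : ℕ} {t : ℝ} (h1 : 5/8 < t) (h2 : t ≤ 11/16) :
    φaux (n+1) t = φaux n (2*t - 7/8) + 1 := by
  simp only [φaux]
  rw [if_neg (by linarith), if_neg (by linarith), if_neg (by linarith),
    if_neg (not_lt.mpr (by linarith)), if_neg (by linarith), if_neg (by linarith), if_pos h2]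

lemma φaux_8 {n : ℕ} {t : ℝ} (h1 : 11/16 < t) (h2 : t < 3/4) :
    φaux (n+1) t = φaux n (4*t - 5/2) := by
  simp only [φaux]
  rw [if_neg (by linarith), if_neg (by linarith), if_neg (by linarith),
    if_neg (not_lt.mpr (by linarith)), if_neg (by linarith), if_neg (by linarith),
    if_neg (by linarith), if_pos h2]

lemma φaux_9 {n : ℕ} : φaux (n+1) (3/4 : ℝ) = 0 := by
  simp only [φaux]
  rw [if_neg (by norm_num), if_neg (by norm_num), if_neg (by norm_num),
    if_neg (by norm_num), if_neg (by norm_num), if_neg (by norm_num),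
    if_neg (by norm_num), if_neg (by norm_num), if_pos (le_refl _)]

lemma φaux_10 {n : ℕ} {t : ℝ} (h1 : 3/4 < t) :
    φaux (n+1) t = φaux n (2*t - 1) + 1 := by
  simp only [φaux]
  rw [if_neg (by linarith), if_neg (by linarith), if_neg (by linarith),
    if_neg (not_lt.mpr (by linarith)), if_neg (by linarith), if_neg (by linarith),
    if_neg (by linarith), if_neg (not_lt.mpr (by linarith)), if_neg (by linarith)]

lemma dyA {n : ℕ} {t : ℝ} (h : DyN n t) (h1 : 3/8 < t) (h2 : t ≤ 7/16) : 4 ≤ n := by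
  by_contra hn
  push_neg at hn
  obtain ⟨a, ha⟩ := h
  have h4 : (2:ℝ)^((3-n)+1) * 2^n = 16 := by
    have e : (3-n)+1+n = 4 := by omega
    rw [← pow_add, e]
    norm_num
  have hb : ((2^(3-n) * a : ℤ) : ℝ) * 2 = 16 * t := by
    push_cast
    rw [mul_comm (16:ℝ) t, ← ha, ← h4, pow_succ]
    ring
  set b : ℤ := 2^(3-n) * a with hbdef
  have l1 : (3:ℝ) < (b:ℝ) := by nlinarith
  have l2 : (b:ℝ) < 4 := by nlinarith
  have m1 : (3:ℤ) < b := by exact_mod_cast l1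
  have m2 : b < 4 := by exact_mod_cast l2
  omega

lemma dyB {n : ℕ} {t : ℝ} (h : DyN n t) (h1 : 7/16 < t) (h2 : t < 1/2) : 2 ≤ n := by
  by_contra hn
  push_neg at hn
  obtain ⟨a, ha⟩ := h
  have h4 : (2:ℝ)^((1-n)+1) * 2^n = 4 := by
    have e : (1-n)+1+n = 2 := by omega
    rw [← pow_add, e]
    norm_num
  have hb : ((2^(1-n) * a : ℤ) : ℝ) * 2 = 4 * t := by
    push_cast
    rw [mul_comm (4:ℝ) t, ← ha, ← h4, pow_succ]
    ring
  set b : ℤ := 2^(1-n) * a with hbdef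
  have l1 : (0:ℝ) < (b:ℝ) := by nlinarith
  have l2 : (b:ℝ) < 1 := by nlinarith
  have m1 : (0:ℤ) < b := by exact_mod_cast l1
  have m2 : b < 1 := by exact_mod_cast l2
  omega

lemma dyC {n : ℕ} {t : ℝ} (h : DyN n t) (h1 : 5/8 < t) (h2 : t ≤ 11/16) : 4 ≤ n := by
  by_contra hn
  push_neg at hn
  obtain ⟨a, ha⟩ := h
  have h4 : (2:ℝ)^((3-n)+1) * 2^n = 16 := by
    have e : (3-n)+1+n = 4 := by omega
    rw [← pow_add, e]
    norm_num
  have hb : ((2^(3-n) * a : ℤ) : ℝ) * 2 = 16 * t := by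
    push_cast
    rw [mul_comm (16:ℝ) t, ← ha, ← h4, pow_succ]
    ring
  set b : ℤ := 2^(3-n) * a with hbdef
  have l1 : (5:ℝ) < (b:ℝ) := by nlinarith
  have l2 : (b:ℝ) < 6 := by nlinarith
  have m1 : (5:ℤ) < b := by exact_mod_cast l1
  have m2 : b < 6 := by exact_mod_cast l2
  omega

lemma dyD {n : ℕ} {t : ℝ} (h : DyN n t) (h1 : 11/16 < t) (h2 : t < 3/4) : 2 ≤ n := by
  by_contra hn
  push_neg at hn
  obtain ⟨a, ha⟩ := h
  have h4 : (2:ℝ)^((1-n)+1) * 2^n = 4 := by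
    have e : (1-n)+1+n = 2 := by omega
    rw [← pow_add, e]
    norm_num
  have hb : ((2^(1-n) * a : ℤ) : ℝ) * 2 = 4 * t := by
    push_cast
    rw [mul_comm (4:ℝ) t, ← ha, ← h4, pow_succ]
    ring
  set b : ℤ := 2^(1-n) * a with hbdef
  have l1 : (1:ℝ) < (b:ℝ) := by nlinarith
  have l2 : (b:ℝ) < 2 := by nlinarith
  have m1 : (1:ℤ) < b := by exact_mod_cast l1
  have m2 : b < 2 := by exact_mod_cast l2
  omega

lemma stab : ∀ n, ∀ t : ℝ, 0 < t → t < 1 → DyN n t → ∀ m, n ≤ m → φaux m t = φaux n t := by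
  intro n
  induction n using Nat.strong_induction_on with
  | _ n ih =>
    intro t h0 h1 hd m hm
    match n, hm, ih, hd with
    | 0, hm, ih, hd =>
      obtain ⟨a, ha⟩ := hd
      norm_num at ha
      have m1 : (0:ℤ) < a := by exact_mod_cast ha ▸ h0
      have m2 : a < 1 := by exact_mod_cast ha ▸ h1
      omega
    | (n'+1), hm, ih, hd =>
      obtain ⟨m', rfl⟩ : ∃ m', m = m'+1 := ⟨m-1, by omega⟩
      have hm' : n' ≤ m' := by omega
      obtain ⟨a, ha⟩ := hd
      rcases le_or_gt t (1/4) with hc | hc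
      · rw [φaux_1 hc, φaux_1 hc]
        congr 1
        exact ih n' (by omega) (2*t) (by linarith) (by linarith)
          ⟨a, by rw [← ha, pow_succ]; ring⟩ m' hm'
      rcases le_or_gt t (3/8) with hc2 | hc2
      · rw [φaux_2 hc hc2, φaux_2 hc hc2]
      rcases le_or_gt t (7/16) with hc3 | hc3
      · have h4 : 4 ≤ n'+1 := dyA ⟨a, ha⟩ hc2 hc3
        obtain ⟨k, rfl⟩ : ∃ k, n' = k+3 := ⟨n'-3, by omega⟩
        rw [φaux_3 hc2 hc3, φaux_3 hc2 hc3]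
        congr 1
        exact ih (k+3) (by omega) (2*t - 3/8) (by linarith) (by linarith)
          ⟨a - 3*2^k, by push_cast; linear_combination ha⟩ m' hm'
      rcases lt_or_ge t (1/2) with hc4 | hc4
      · have h2 : 2 ≤ n'+1 := dyB ⟨a, ha⟩ hc3 hc4
        obtain ⟨k, rfl⟩ : ∃ k, n' = k+1 := ⟨n'-1, by omega⟩
        rw [φaux_4 hc3 hc4, φaux_4 hc3 hc4]
        exact ih (k+1) (by omega) (4*t - 3/2) (by linarith) (by linarith)
          ⟨2*a - 3*2^k, by push_cast; linear_combination 2*ha⟩ m' hm'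
      rcases le_or_gt t (1/2) with hc5 | hc5
      · have : t = 1/2 := le_antisymm hc5 hc4
        subst this
        rw [φaux_5, φaux_5]
      rcases le_or_gt t (5/8) with hc6 | hc6
      · rw [φaux_6 hc5 hc6, φaux_6 hc5 hc6]
      rcases le_or_gt t (11/16) with hc7 | hc7
      · have h4 : 4 ≤ n'+1 := dyC ⟨a, ha⟩ hc6 hc7
        obtain ⟨k, rfl⟩ : ∃ k, n' = k+3 := ⟨n'-3, by omega⟩
        rw [φaux_7 hc6 hc7, φaux_7 hc6 hc7]
        congr 1
        exact ih (k+3) (by omega) (2*t - 7/8) (by linarith) (by linarith)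
          ⟨a - 7*2^k, by push_cast; linear_combination ha⟩ m' hm'
      rcases lt_or_ge t (3/4) with hc8 | hc8
      · have h2 : 2 ≤ n'+1 := dyD ⟨a, ha⟩ hc7 hc8
        obtain ⟨k, rfl⟩ : ∃ k, n' = k+1 := ⟨n'-1, by omega⟩
        rw [φaux_8 hc7 hc8, φaux_8 hc7 hc8]
        exact ih (k+1) (by omega) (4*t - 5/2) (by linarith) (by linarith)
          ⟨2*a - 5*2^k, by push_cast; linear_combination 2*ha⟩ m' hm'
      rcases le_or_gt t (3/4) with hc9 | hc9
      · have : t = 3/4 := le_antisymm hc9 hc8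
        subst this
        rw [φaux_9, φaux_9]
      · rw [φaux_10 hc9, φaux_10 hc9]
        congr 1
        exact ih n' (by omega) (2*t - 1) (by linarith) (by linarith)
          ⟨a - 2^n', by push_cast; linear_combination ha⟩ m' hm'

/-- The mod-2 potential function on dyadic rationals in `(0,1)`. -/
noncomputable def Φ (t : ℝ) : ZMod 2 := φaux (sInf {n | DyN n t}) t

lemma Phi_eq {n : ℕ} {t : ℝ} (h0 : 0 < t) (h1 : t < 1) (hd : DyN n t) : Φ t = φaux n t := by
  have hne : {n | DyN n t}.Nonempty := ⟨n, hd⟩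
  have hmem : DyN (sInf {n | DyN n t}) t := Nat.sInf_mem hne
  have hle : sInf {n | DyN n t} ≤ n := Nat.sInf_le hd
  exact (stab _ t h0 h1 hmem n hle).symm

lemma two_zz : (1 + 1 : ZMod 2) = 0 := rfl

lemma R1 {t : ℝ} (h0 : 0 < t) (h2 : t ≤ 1/4) {n : ℕ} {a : ℤ} (ha : (2:ℝ)^n * t = a) :
    Φ (2*t) = Φ t + 1 := by
  have e1 : Φ t = φaux (n+1) t :=
    Phi_eq h0 (by linarith) ⟨2*a, by push_cast; linear_combination 2*ha⟩
  have e2 : Φ (2*t) = φaux n (2*t) :=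
    Phi_eq (by linarith) (by linarith) ⟨2*a, by push_cast; linear_combination 2*ha⟩
  rw [e1, e2, φaux_1 h2, add_assoc, two_zz, add_zero]

lemma R2 {t : ℝ} (hl : 1/4 < t) (hr : t ≤ 1/2) {n : ℕ} {a : ℤ} (ha : (2:ℝ)^n * t = a) :
    Φ (t + 1/4) = Φ t := by
  have h0 : (0:ℝ) < t := by linarith
  rcases le_or_gt t (3/8) with hc | hc
  · have e1 : Φ t = φaux (n+1) t :=
      Phi_eq h0 (by linarith) ⟨2*a, by push_cast; linear_combination 2*ha⟩
    have e2 : Φ (t + 1/4) = φaux (n+1+1) (t + 1/4) :=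
      Phi_eq (by linarith) (by linarith)
        ⟨4*a + 2^n, by push_cast; linear_combination 4*ha⟩
    rw [e1, e2, φaux_2 hl hc, φaux_6 (by linarith) (by linarith)]
  rcases le_or_gt t (7/16) with hc2 | hc2
  · have h4 : 4 ≤ n := dyA ⟨a, ha⟩ hc hc2
    obtain ⟨k, rfl⟩ : ∃ k, n = k+4 := ⟨n-4, by omega⟩
    have e1 : Φ t = φaux (k+4+1) t :=
      Phi_eq h0 (by linarith) ⟨2*a, by push_cast; linear_combination 2*ha⟩
    have e2 : Φ (t + 1/4) = φaux (k+4+1+1) (t + 1/4) :=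
      Phi_eq (by linarith) (by linarith)
        ⟨4*a + 2^(k+4), by push_cast; linear_combination 4*ha⟩
    have e3 : φaux (k+4) (2*t - 3/8) = Φ (2*t - 3/8) :=
      (Phi_eq (by linarith) (by linarith)
        ⟨2*a - 3*2^(k+1), by push_cast; linear_combination 2*ha⟩).symm
    have e4 : φaux (k+4+1) (2*(t+1/4) - 7/8) = Φ (2*t - 3/8) := by
      have e : 2*(t+1/4) - 7/8 = 2*t - 3/8 := by ring
      rw [e]
      exact (Phi_eq (by linarith) (by linarith)
        ⟨4*a - 3*2^(k+2), by push_cast; linear_combination 4*ha⟩).symm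
    rw [e1, e2, φaux_3 hc hc2, φaux_7 (by linarith) (by linarith), e3, e4]
  rcases lt_or_ge t (1/2) with hc3 | hc3
  · have h2 : 2 ≤ n := dyB ⟨a, ha⟩ hc2 hc3
    obtain ⟨k, rfl⟩ : ∃ k, n = k+2 := ⟨n-2, by omega⟩
    have e1 : Φ t = φaux (k+2+1) t :=
      Phi_eq h0 (by linarith) ⟨2*a, by push_cast; linear_combination 2*ha⟩
    have e2 : Φ (t + 1/4) = φaux (k+2+1+1) (t + 1/4) :=
      Phi_eq (by linarith) (by linarith)
        ⟨4*a + 2^(k+2), by push_cast; linear_combination 4*ha⟩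
    have e3 : φaux (k+2) (4*t - 3/2) = Φ (4*t - 3/2) :=
      (Phi_eq (by linarith) (by linarith)
        ⟨4*a - 3*2^(k+1), by push_cast; linear_combination 4*ha⟩).symm
    have e4 : φaux (k+2+1) (4*(t+1/4) - 5/2) = Φ (4*t - 3/2) := by
      have e : 4*(t+1/4) - 5/2 = 4*t - 3/2 := by ring
      rw [e]
      exact (Phi_eq (by linarith) (by linarith)
        ⟨8*a - 3*2^(k+2), by push_cast; linear_combination 8*ha⟩).symm
    rw [e1, e2, φaux_4 hc2 hc3, φaux_8 (by linarith) (by linarith), e3, e4]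
  · have : t = 1/2 := le_antisymm hr hc3
    subst this
    have e1 : Φ ((1:ℝ)/2) = φaux (0+1) (1/2) :=
      Phi_eq (by norm_num) (by norm_num) ⟨1, by norm_num⟩
    have e2 : Φ ((1:ℝ)/2 + 1/4) = φaux (1+1) (1/2 + 1/4) :=
      Phi_eq (by norm_num) (by norm_num) ⟨3, by norm_num⟩
    rw [e1, e2, φaux_5]
    norm_num
    exact φaux_9

lemma R3 {t : ℝ} (hl : 1/2 < t) (hr : t < 1) {n : ℕ} {a : ℤ} (ha : (2:ℝ)^n * t = a) :
    Φ (t/2 + 1/2) = Φ t + 1 := by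
  have e1 : Φ (t/2 + 1/2) = φaux (n+1) (t/2 + 1/2) :=
    Phi_eq (by linarith) (by linarith) ⟨a + 2^n, by push_cast; linear_combination ha⟩
  have e2 : φaux n (2*(t/2+1/2) - 1) = Φ t := by
    have e : 2*(t/2+1/2) - 1 = t := by ring
    rw [e]
    exact (Phi_eq (by linarith) hr ⟨a, ha⟩).symm
  rw [e1, φaux_10 (by linarith), e2]

lemma R4 {t : ℝ} (hl : 5/8 < t) (hr : t ≤ 3/4) {n : ℕ} {a : ℤ} (ha : (2:ℝ)^n * t = a) :
    Φ (2*t - 5/8) = Φ t + 1 := by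
  have h0 : (0:ℝ) < t := by linarith
  rcases le_or_gt t (11/16) with hc | hc
  · have h4 : 4 ≤ n := dyC ⟨a, ha⟩ hl hc
    obtain ⟨k, rfl⟩ : ∃ k, n = k+4 := ⟨n-4, by omega⟩
    have e1 : Φ t = φaux (k+4+1) t :=
      Phi_eq h0 (by linarith) ⟨2*a, by push_cast; linear_combination 2*ha⟩
    have e3 : φaux (k+4) (2*t - 7/8) = Φ (2*t - 7/8) :=
      (Phi_eq (by linarith) (by linarith)
        ⟨2*a - 7*2^(k+1), by push_cast; linear_combination 2*ha⟩).symm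
    have key : Φ (2*t - 5/8) = Φ (2*t - 7/8) := by
      have e : (2*t - 7/8) + 1/4 = 2*t - 5/8 := by ring
      rw [← e]
      exact R2 (by linarith) (by linarith)
        (n := k+5) (a := 4*a - 7*2^(k+2)) (by push_cast; linear_combination 4*ha)
    rw [key, e1, φaux_7 hl hc, e3, add_assoc, two_zz, add_zero]
  rcases lt_or_ge t (3/4) with hc2 | hc2
  · have h2 : 2 ≤ n := dyD ⟨a, ha⟩ hc hc2
    obtain ⟨k, rfl⟩ : ∃ k, n = k+2 := ⟨n-2, by omega⟩
    have e1 : Φ t = φaux (k+2+1) t :=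
      Phi_eq h0 (by linarith) ⟨2*a, by push_cast; linear_combination 2*ha⟩
    have e3 : φaux (k+2) (4*t - 5/2) = Φ (4*t - 5/2) :=
      (Phi_eq (by linarith) (by linarith)
        ⟨4*a - 5*2^(k+1), by push_cast; linear_combination 4*ha⟩).symm
    have key1 : Φ (2*t - 5/8) = Φ (4*t - 9/4) + 1 := by
      have e : (4*t - 9/4)/2 + 1/2 = 2*t - 5/8 := by ring
      rw [← e]
      exact R3 (by linarith) (by linarith)
        (n := k+4) (a := 16*a - 9*2^(k+2)) (by push_cast; linear_combination 16*ha)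
    have key2 : Φ (4*t - 9/4) = Φ (4*t - 5/2) := by
      have e : (4*t - 5/2) + 1/4 = 4*t - 9/4 := by ring
      rw [← e]
      exact R2 (by linarith) (by linarith)
        (n := k+2) (a := 4*a - 5*2^(k+1)) (by push_cast; linear_combination 4*ha)
    rw [key1, key2, e1, φaux_8 hc hc2, e3]
  · have : t = 3/4 := le_antisymm hr hc2
    subst this
    have key : Φ ((3:ℝ)/4/2 + 1/2) = Φ (3/4) + 1 :=
      R3 (by norm_num) (by norm_num) (n := 2) (a := 3) (by norm_num)
    have e : (3:ℝ)/4/2 + 1/2 = 2*(3/4) - 5/8 := by norm_num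
    rw [← e, key]


/-- The function `w = x₁x₂x₁⁻¹` (left-to-right composition). -/
def wfun (t : ℝ) : ℝ := if t ≤ 5/8 then t else if t ≤ 3/4 then 2*t - 5/8 else t/2 + 1/2

/-- The inverse of `wfun`. -/
def winv (t : ℝ) : ℝ := if t ≤ 5/8 then t else if t ≤ 7/8 then t/2 + 5/16 else 2*t - 1

/-- The element `x₁x₂x₁⁻¹` as a bijection of `[0,1]`. -/
def W : Equiv.Perm I where
  toFun t := ⟨wfun t.1, by
    obtain ⟨h0, h1⟩ := Set.mem_Icc.mp t.2
    simp only [Set.mem_Icc, wfun]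
    split_ifs <;> constructor <;> linarith⟩
  invFun t := ⟨winv t.1, by
    obtain ⟨h0, h1⟩ := Set.mem_Icc.mp t.2
    simp only [Set.mem_Icc, winv]
    split_ifs <;> constructor <;> linarith⟩
  left_inv t := by
    obtain ⟨h0, h1⟩ := Set.mem_Icc.mp t.2
    apply Subtype.ext
    show winv (wfun t.1) = t.1
    simp only [wfun, winv]
    split_ifs <;> linarith
  right_inv t := by
    obtain ⟨h0, h1⟩ := Set.mem_Icc.mp t.2
    apply Subtype.ext
    show wfun (winv t.1) = t.1
    simp only [wfun, winv]
    split_ifs <;> linarith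

lemma x1_eq : x 1 = x₁ := by simp [x]

lemma x2_eq : x 2 = x₀ * x₁ * x₀⁻¹ := by
  show (if (2:ℕ) = 0 then x₀ else x₀ ^ (2-1) * x₁ * (x₀ ^ (2-1))⁻¹) = _
  norm_num

lemma x0_eq : x 0 = x₀ := by simp [x]

section funlemmas
variable {t : ℝ}

lemma x0fun_1 (h : t ≤ 1/4) : x0fun t = 2*t := if_pos h
lemma x0fun_2 (h1 : 1/4 < t) (h2 : t ≤ 1/2) : x0fun t = t + 1/4 := by
  rw [x0fun, if_neg (by linarith), if_pos h2]
lemma x0fun_3 (h1 : 1/2 < t) : x0fun t = t/2 + 1/2 := by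
  rw [x0fun, if_neg (by linarith), if_neg (by linarith)]

lemma x0inv_1 (h : t ≤ 1/2) : x0inv t = t/2 := if_pos h
lemma x0inv_2 (h1 : 1/2 < t) (h2 : t ≤ 3/4) : x0inv t = t - 1/4 := by
  rw [x0inv, if_neg (by linarith), if_pos h2]
lemma x0inv_3 (h1 : 3/4 < t) : x0inv t = 2*t - 1 := by
  rw [x0inv, if_neg (by linarith), if_neg (by linarith)]

lemma x1fun_1 (h : t ≤ 1/2) : x1fun t = t := if_pos h
lemma x1fun_2 (h1 : 1/2 < t) (h2 : t ≤ 5/8) : x1fun t = 2*t - 1/2 := by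
  rw [x1fun, if_neg (by linarith), if_pos h2]
lemma x1fun_3 (h1 : 5/8 < t) (h2 : t ≤ 3/4) : x1fun t = t + 1/8 := by
  rw [x1fun, if_neg (by linarith), if_neg (by linarith), if_pos h2]
lemma x1fun_4 (h1 : 3/4 < t) : x1fun t = t/2 + 1/2 := by
  rw [x1fun, if_neg (by linarith), if_neg (by linarith), if_neg (by linarith)]

lemma x1inv_1 (h : t ≤ 1/2) : x1inv t = t := if_pos h
lemma x1inv_2 (h1 : 1/2 < t) (h2 : t ≤ 3/4) : x1inv t = t/2 + 1/4 := by
  rw [x1inv, if_neg (by linarith), if_pos h2]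
lemma x1inv_3 (h1 : 3/4 < t) (h2 : t ≤ 7/8) : x1inv t = t - 1/8 := by
  rw [x1inv, if_neg (by linarith), if_neg (by linarith), if_pos h2]
lemma x1inv_4 (h1 : 7/8 < t) : x1inv t = 2*t - 1 := by
  rw [x1inv, if_neg (by linarith), if_neg (by linarith), if_neg (by linarith)]

lemma wfun_1 (h : t ≤ 5/8) : wfun t = t := if_pos h
lemma wfun_2 (h1 : 5/8 < t) (h2 : t ≤ 3/4) : wfun t = 2*t - 5/8 := by
  rw [wfun, if_neg (by linarith), if_pos h2]
lemma wfun_3 (h1 : 3/4 < t) : wfun t = t/2 + 1/2 := by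
  rw [wfun, if_neg (by linarith), if_neg (by linarith)]

lemma winv_1 (h : t ≤ 5/8) : winv t = t := if_pos h
lemma winv_2 (h1 : 5/8 < t) (h2 : t ≤ 7/8) : winv t = t/2 + 5/16 := by
  rw [winv, if_neg (by linarith), if_pos h2]
lemma winv_3 (h1 : 7/8 < t) : winv t = 2*t - 1 := by
  rw [winv, if_neg (by linarith), if_neg (by linarith)]

end funlemmas

lemma comp_eq_wfun {t : ℝ} (h0 : 0 ≤ t) (h1 : t ≤ 1) :
    x1inv (x0fun (x1fun (x0inv (x1fun t)))) = wfun t := by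
  rcases le_or_gt t (1/2) with hA | hA
  · rw [x1fun_1 hA, x0inv_1 hA, x1fun_1 (by linarith), x0fun_1 (by linarith),
      x1inv_1 (by linarith), wfun_1 (by linarith)]
    ring
  rcases le_or_gt t (5/8) with hB | hB
  · rw [x1fun_2 hA hB, x0inv_2 (by linarith) (by linarith),
      x1fun_1 (by linarith), x0fun_2 (by linarith) (by linarith),
      x1inv_2 (by linarith) (by linarith), wfun_1 hB]
    ring
  rcases le_or_gt t (11/16) with hC | hC
  · rw [x1fun_3 hB (by linarith), x0inv_3 (by linarith),
      x1fun_2 (by linarith) (by linarith), x0fun_3 (by linarith),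
      x1inv_3 (by linarith) (by linarith), wfun_2 hB (by linarith)]
    ring
  rcases le_or_gt t (3/4) with hD | hD
  · rw [x1fun_3 hB hD, x0inv_3 (by linarith),
      x1fun_3 (by linarith) (by linarith), x0fun_3 (by linarith),
      x1inv_4 (by linarith), wfun_2 hB hD]
    ring
  · rw [x1fun_4 hD, x0inv_3 (by linarith), x1fun_4 (by linarith),
      x0fun_3 (by linarith), x1inv_4 (by linarith), wfun_3 hD]
    ring

lemma x1_x2_x1 : (x 1)⁻¹ * x 2 * x 1 = W := by
  rw [x1_eq, x2_eq]
  apply Equiv.ext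
  intro t
  apply Subtype.ext
  obtain ⟨h0, h1⟩ := Set.mem_Icc.mp t.2
  show x1inv (x0fun (x1fun (x0inv (x1fun t.1)))) = wfun t.1
  exact comp_eq_wfun h0 h1


/-- `f` is linear with slope `2^k` on a left neighborhood of `t`. -/
def LL (f : Equiv.Perm I) (t : I) (k : ℤ) : Prop :=
  ∃ δ : ℝ, 0 < δ ∧ δ ≤ t.1 ∧ ∀ s : I, t.1 - δ < s.1 → s.1 < t.1 →
    (f s).1 = (f t).1 + 2^k * (s.1 - t.1)

lemma two_ne : (2:ℝ) ≠ 0 := by norm_num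

lemma LL_unique {f : Equiv.Perm I} {t : I} {k k' : ℤ} (h : LL f t k) (h' : LL f t k') :
    k = k' := by
  obtain ⟨δ, hp, hle, hv⟩ := h
  obtain ⟨δ', hp', hle', hv'⟩ := h'
  have hmp : 0 < min δ δ' := lt_min hp hp'
  have hm1 : min δ δ' ≤ δ := min_le_left _ _
  have hm2 : min δ δ' ≤ δ' := min_le_right _ _
  have hmt : min δ δ' ≤ t.1 := le_trans hm1 hle
  have ht1 : t.1 ≤ 1 := (Set.mem_Icc.mp t.2).2
  set s : I := ⟨t.1 - min δ δ'/2, Set.mem_Icc.mpr ⟨by linarith, by linarith⟩⟩ with hs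
  have hsv : s.1 = t.1 - min δ δ'/2 := rfl
  have e1 := hv s (by rw [hsv]; linarith) (by rw [hsv]; linarith)
  have e2 := hv' s (by rw [hsv]; linarith) (by rw [hsv]; linarith)
  have e3 : (2:ℝ)^k * (s.1 - t.1) = 2^k' * (s.1 - t.1) := by linarith
  have hne : s.1 - t.1 ≠ 0 := by rw [hsv]; intro hc; linarith
  exact zpow_right_injective₀ (by norm_num) (by norm_num) (mul_right_cancel₀ hne e3)

/-- The subgroup of permutations of `[0,1]` that preserve dyadic rationals of `(0,1)`,
are left-linear with slope a power of 2 at each of them, and are compatible with the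
potential function `Φ` in the cocycle sense. -/
def Kgrp : Subgroup (Equiv.Perm I) where
  carrier := {f | ∀ t : I, Dy t.1 → Dy (f t).1 ∧ Dy (f⁻¹ t).1 ∧
      ∃ k : ℤ, LL f t k ∧ Φ (f t).1 = Φ t.1 + (k : ZMod 2)}
  one_mem' := by
    intro t ht
    refine ⟨ht, ht, 0, ⟨t.1, ht.1, le_refl _, ?_⟩, by simp⟩
    intro s hs1 hs2
    simp only [Equiv.Perm.coe_one, id_eq, zpow_zero, one_mul]
    ring
  mul_mem' := by
    intro a b ha hb t ht
    obtain ⟨hbt, hbit, k1, ⟨δ1, hδ1p, hδ1le, hL1⟩, hP1⟩ := hb t ht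
    obtain ⟨habt, habit, k2, ⟨δ2, hδ2p, hδ2le, hL2⟩, hP2⟩ := ha (b t) hbt
    have hait : Dy ((a⁻¹) t).1 := (ha t ht).2.1
    have hbait : Dy ((b⁻¹) ((a⁻¹) t)).1 := (hb ((a⁻¹) t) hait).2.1
    have hp1 : (0:ℝ) < (2:ℝ)^k1 := zpow_pos (by norm_num) _
    have hpn1 : (0:ℝ) < (2:ℝ)^(-k1) := zpow_pos (by norm_num) _
    have twoone : (2:ℝ)^k1 * (2:ℝ)^(-k1) = 1 := by
      rw [← zpow_add₀ two_ne]; norm_num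
    refine ⟨?_, ?_, k1 + k2, ⟨min δ1 (2^(-k1) * δ2), lt_min hδ1p (mul_pos hpn1 hδ2p),
      le_trans (min_le_left _ _) hδ1le, ?_⟩, ?_⟩
    · rw [Equiv.Perm.mul_apply]; exact habt
    · rw [mul_inv_rev, Equiv.Perm.mul_apply]; exact hbait
    · intro s hs1 hs2
      have hm2 : min δ1 ((2:ℝ)^(-k1) * δ2) ≤ 2^(-k1) * δ2 := min_le_right _ _
      have hbs := hL1 s (by linarith [min_le_left δ1 ((2:ℝ)^(-k1) * δ2)]) hs2
      have e0 : (2:ℝ)^k1 * (s.1 - t.1) = -((2:ℝ)^k1 * (t.1 - s.1)) := by ring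
      have h2 : (2:ℝ)^k1 * (t.1 - s.1) < (2:ℝ)^k1 * (2^(-k1) * δ2) :=
        mul_lt_mul_of_pos_left (by linarith) hp1
      rw [← mul_assoc, twoone, one_mul] at h2
      have hlt : (b s).1 < (b t).1 := by nlinarith
      have hgt : (b t).1 - δ2 < (b s).1 := by linarith
      have hfin := hL2 (b s) hgt hlt
      have e2 : (2:ℝ)^(k1+k2) = 2^k2 * 2^k1 := by rw [zpow_add₀ two_ne]; ring
      rw [Equiv.Perm.mul_apply, Equiv.Perm.mul_apply, hfin, hbs, e2]
      ring
    · rw [Equiv.Perm.mul_apply, hP2, hP1]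
      push_cast
      ring
  inv_mem' := by
    intro a ha t ht
    have h1 := ha t ht
    have hu : Dy ((a⁻¹) t).1 := h1.2.1
    obtain ⟨hDau, hDaiu, k, ⟨δ, hδp, hδle, hL⟩, hP⟩ := ha ((a⁻¹) t) hu
    have hau : a ((a⁻¹) t) = t := Equiv.apply_symm_apply a t
    rw [hau] at hL hP
    have hp : (0:ℝ) < (2:ℝ)^k := zpow_pos (by norm_num) _
    have hpn : (0:ℝ) < (2:ℝ)^(-k) := zpow_pos (by norm_num) _
    have twoone : (2:ℝ)^k * (2:ℝ)^(-k) = 1 := by rw [← zpow_add₀ two_ne]; norm_num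
    have hu0 : 0 < ((a⁻¹) t).1 := hu.1
    have hu1 : ((a⁻¹) t).1 ≤ 1 := (Set.mem_Icc.mp ((a⁻¹) t).2).2
    have hdle : δ ≤ ((a⁻¹) t).1 := hδle
    -- the key bound : 2^k * δ / 2 ≤ t.1
    have hbound : (2:ℝ)^k * δ / 2 ≤ t.1 := by
      set s0 : I := ⟨((a⁻¹) t).1 - δ/2, Set.mem_Icc.mpr ⟨by linarith, by linarith⟩⟩ with hs0
      have hs0v : s0.1 = ((a⁻¹) t).1 - δ/2 := rfl
      have h := hL s0 (by rw [hs0v]; linarith) (by rw [hs0v]; linarith)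
      have hnn : 0 ≤ (a s0).1 := (Set.mem_Icc.mp (a s0).2).1
      have e : s0.1 - ((a⁻¹) t).1 = -(δ/2) := by rw [hs0v]; ring
      rw [e] at h
      have e2 : (2:ℝ)^k * -(δ/2) = -((2:ℝ)^k * δ / 2) := by ring
      rw [e2] at h
      linarith
    refine ⟨hu, by rw [inv_inv]; exact h1.1, -k, ⟨2^k * δ / 2,
      by positivity, hbound, ?_⟩, ?_⟩
    · intro s hs1 hs2
      have hlow : -((2:ℝ)^k * δ / 2) < s.1 - t.1 := by linarith
      have hmul : (2:ℝ)^(-k) * -((2:ℝ)^k * δ / 2) < (2:ℝ)^(-k) * (s.1 - t.1) :=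
        mul_lt_mul_of_pos_left hlow hpn
      have e3 : (2:ℝ)^(-k) * -((2:ℝ)^k * δ / 2) = -(δ/2) := by
        have : (2:ℝ)^(-k) * (2:ℝ)^k = 1 := by rw [← zpow_add₀ two_ne]; norm_num
        nlinarith [this]
      rw [e3] at hmul
      have hneg : (2:ℝ)^(-k) * (s.1 - t.1) < 0 :=
        mul_neg_of_pos_of_neg hpn (by linarith)
      have hb1 : 0 ≤ ((a⁻¹) t).1 + 2^(-k)*(s.1 - t.1) := by linarith
      have hb2 : ((a⁻¹) t).1 + 2^(-k)*(s.1 - t.1) ≤ 1 := by linarith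
      set s' : I := ⟨((a⁻¹) t).1 + 2^(-k)*(s.1 - t.1), Set.mem_Icc.mpr ⟨hb1, hb2⟩⟩ with hs'
      have hs'v : s'.1 = ((a⁻¹) t).1 + 2^(-k)*(s.1 - t.1) := rfl
      have hval := hL s' (by rw [hs'v]; linarith) (by rw [hs'v]; linarith)
      have e4 : (a s').1 = s.1 := by
        rw [hval, hs'v]
        have : (2:ℝ)^k * (((a⁻¹) t).1 + 2^(-k)*(s.1 - t.1) - ((a⁻¹) t).1)
            = (2:ℝ)^k * 2^(-k) * (s.1 - t.1) := by ring
        rw [this, twoone, one_mul]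
        ring
      have e5 : a s' = s := Subtype.ext e4
      have e6 : (a⁻¹) s = s' := by rw [← e5]; exact Equiv.symm_apply_apply a s'
      rw [e6, hs'v]
    · push_cast
      rw [hP]
      ring


lemma x0_mem : x₀ ∈ Kgrp := by
  intro t ht
  obtain ⟨h0, h1, n, a, ha⟩ := ht
  have ht1 : t.1 ≤ 1 := (Set.mem_Icc.mp t.2).2
  have hbwd : Dy (x0inv t.1) := by
    rcases le_or_gt t.1 (1/2) with hc | hc
    · rw [x0inv_1 hc]
      exact ⟨by linarith, by linarith, n+1, a, by rw [pow_succ]; linear_combination ha⟩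
    rcases le_or_gt t.1 (3/4) with hc2 | hc2
    · rw [x0inv_2 hc hc2]
      exact ⟨by linarith, by linarith, n+2, 4*a - 2^n, by push_cast; linear_combination 4*ha⟩
    · rw [x0inv_3 hc2]
      exact ⟨by linarith, by linarith, n, 2*a - 2^n, by push_cast; linear_combination 2*ha⟩
  have hbwd' : Dy (x₀⁻¹ t).1 := hbwd
  rcases le_or_gt t.1 (1/4) with hc | hc
  · refine ⟨?_, hbwd', 1, ⟨t.1, h0, le_refl _, ?_⟩, ?_⟩
    · show Dy (x0fun t.1)
      rw [x0fun_1 hc]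
      exact ⟨by linarith, by linarith, n, 2*a, by push_cast; linear_combination 2*ha⟩
    · intro s hs1 hs2
      show x0fun s.1 = x0fun t.1 + 2^(1:ℤ) * (s.1 - t.1)
      rw [x0fun_1 (by linarith : s.1 ≤ 1/4), x0fun_1 hc, zpow_one]
      ring
    · show Φ (x0fun t.1) = Φ t.1 + ((1:ℤ) : ZMod 2)
      rw [x0fun_1 hc, R1 h0 hc ha, Int.cast_one]
  rcases le_or_gt t.1 (1/2) with hc2 | hc2
  · refine ⟨?_, hbwd', 0, ⟨t.1 - 1/4, by linarith, by linarith, ?_⟩, ?_⟩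
    · show Dy (x0fun t.1)
      rw [x0fun_2 hc hc2]
      exact ⟨by linarith, by linarith, n+2, 4*a + 2^n, by push_cast; linear_combination 4*ha⟩
    · intro s hs1 hs2
      show x0fun s.1 = x0fun t.1 + 2^(0:ℤ) * (s.1 - t.1)
      rw [x0fun_2 (by linarith : 1/4 < s.1) (by linarith : s.1 ≤ 1/2), x0fun_2 hc hc2,
        zpow_zero]
      ring
    · show Φ (x0fun t.1) = Φ t.1 + ((0:ℤ) : ZMod 2)
      rw [x0fun_2 hc hc2, R2 hc hc2 ha, Int.cast_zero, add_zero]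
  · refine ⟨?_, hbwd', -1, ⟨t.1 - 1/2, by linarith, by linarith, ?_⟩, ?_⟩
    · show Dy (x0fun t.1)
      rw [x0fun_3 hc2]
      exact ⟨by linarith, by linarith, n+1, a + 2^n, by push_cast; linear_combination ha⟩
    · intro s hs1 hs2
      show x0fun s.1 = x0fun t.1 + 2^(-1:ℤ) * (s.1 - t.1)
      have e : (2:ℝ)^(-1:ℤ) = 1/2 := by norm_num
      rw [x0fun_3 (by linarith : 1/2 < s.1), x0fun_3 hc2, e]
      ring
    · show Φ (x0fun t.1) = Φ t.1 + ((-1:ℤ) : ZMod 2)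
      have e : ((-1:ℤ) : ZMod 2) = 1 := by decide
      rw [x0fun_3 hc2, R3 hc2 h1 ha, e]

lemma W_mem : W ∈ Kgrp := by
  intro t ht
  obtain ⟨h0, h1, n, a, ha⟩ := ht
  have ht1 : t.1 ≤ 1 := (Set.mem_Icc.mp t.2).2
  have hbwd : Dy (winv t.1) := by
    rcases le_or_gt t.1 (5/8) with hc | hc
    · rw [winv_1 hc]
      exact ⟨h0, h1, n, a, ha⟩
    rcases le_or_gt t.1 (7/8) with hc2 | hc2
    · rw [winv_2 hc hc2]
      exact ⟨by linarith, by linarith, n+5, 16*a + 5*2^(n+1), by push_cast; linear_combination 16*ha⟩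
    · rw [winv_3 hc2]
      exact ⟨by linarith, by linarith, n, 2*a - 2^n, by push_cast; linear_combination 2*ha⟩
  have hbwd' : Dy (W⁻¹ t).1 := hbwd
  rcases le_or_gt t.1 (5/8) with hc | hc
  · refine ⟨?_, hbwd', 0, ⟨t.1, h0, le_refl _, ?_⟩, ?_⟩
    · show Dy (wfun t.1)
      rw [wfun_1 hc]
      exact ⟨h0, h1, n, a, ha⟩
    · intro s hs1 hs2
      show wfun s.1 = wfun t.1 + 2^(0:ℤ) * (s.1 - t.1)
      rw [wfun_1 (by linarith : s.1 ≤ 5/8), wfun_1 hc, zpow_zero]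
      ring
    · show Φ (wfun t.1) = Φ t.1 + ((0:ℤ) : ZMod 2)
      rw [wfun_1 hc, Int.cast_zero, add_zero]
  rcases le_or_gt t.1 (3/4) with hc2 | hc2
  · refine ⟨?_, hbwd', 1, ⟨t.1 - 5/8, by linarith, by linarith, ?_⟩, ?_⟩
    · show Dy (wfun t.1)
      rw [wfun_2 hc hc2]
      exact ⟨by linarith, by linarith, n+3, 16*a - 5*2^n, by push_cast; linear_combination 16*ha⟩
    · intro s hs1 hs2
      show wfun s.1 = wfun t.1 + 2^(1:ℤ) * (s.1 - t.1)
      rw [wfun_2 (by linarith : 5/8 < s.1) (by linarith : s.1 ≤ 3/4), wfun_2 hc hc2, zpow_one]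
      ring
    · show Φ (wfun t.1) = Φ t.1 + ((1:ℤ) : ZMod 2)
      rw [wfun_2 hc hc2, R4 hc hc2 ha, Int.cast_one]
  · refine ⟨?_, hbwd', -1, ⟨t.1 - 3/4, by linarith, by linarith, ?_⟩, ?_⟩
    · show Dy (wfun t.1)
      rw [wfun_3 hc2]
      exact ⟨by linarith, by linarith, n+1, a + 2^n, by push_cast; linear_combination ha⟩
    · intro s hs1 hs2
      show wfun s.1 = wfun t.1 + 2^(-1:ℤ) * (s.1 - t.1)
      have e : (2:ℝ)^(-1:ℤ) = 1/2 := by norm_num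
      rw [wfun_3 (by linarith : 3/4 < s.1), wfun_3 hc2, e]
      ring
    · show Φ (wfun t.1) = Φ t.1 + ((-1:ℤ) : ZMod 2)
      have e : ((-1:ℤ) : ZMod 2) = 1 := by decide
      rw [wfun_3 hc2, R3 (by linarith) h1 ha, e]

lemma H15_le_K : H15 ≤ Kgrp := by
  rw [H15]
  apply (Subgroup.closure_le _).2
  rintro g (rfl | rfl)
  · rw [x0_eq]; exact x0_mem
  · rw [x1_x2_x1]; exact W_mem

lemma x1_notin_K : x 1 ∉ Kgrp := by
  rw [x1_eq]
  intro hk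
  set t0 : I := ⟨3/4, Set.mem_Icc.mpr ⟨by norm_num, by norm_num⟩⟩ with ht0def
  have ht0v : t0.1 = 3/4 := rfl
  have ht : Dy t0.1 := ⟨by norm_num, by norm_num, 2, 3, by norm_num⟩
  obtain ⟨_, _, k, hLL, hP⟩ := hk t0 ht
  have hLL0 : LL x₁ t0 0 := by
    refine ⟨1/16, by norm_num, by rw [ht0v]; norm_num, ?_⟩
    intro s hs1 hs2
    rw [ht0v] at hs1 hs2
    show x1fun s.1 = x1fun t0.1 + 2^(0:ℤ) * (s.1 - t0.1)
    rw [ht0v, x1fun_3 (by linarith : 5/8 < s.1) (by linarith : s.1 ≤ 3/4),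
      x1fun_3 (by norm_num) (by norm_num), zpow_zero]
    ring
  have hk0 : k = 0 := LL_unique hLL hLL0
  subst hk0
  have hval : (x₁ t0).1 = 7/8 := by
    show x1fun t0.1 = 7/8
    rw [ht0v, x1fun_3 (by norm_num) (by norm_num)]
    norm_num
  rw [hval, ht0v] at hP
  have hR : Φ ((7:ℝ)/8) = Φ (3/4) + 1 := by
    have h := R3 (t := 3/4) (by norm_num) (by norm_num) (n := 2) (a := 3) (by norm_num)
    have e : (3:ℝ)/4/2 + 1/2 = 7/8 := by norm_num
    rwa [e] at h
  rw [hP] at hR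
  simp at hR

lemma x1_notin_H15 : x 1 ∉ H15 := fun h => x1_notin_K (H15_le_K h)

lemma H15_le_F : H15 ≤ F := by
  rw [H15]
  apply (Subgroup.closure_le _).2
  rintro g (rfl | rfl)
  · exact x_mem_F 0
  · exact mul_mem (mul_mem (inv_mem (x_mem_F 1)) (x_mem_F 2)) (x_mem_F 1)

/-- `H = ⟨x_0, x_1x_2x_1⁻¹⟩` is a proper subgroup of `F` (in particular
`x_1 ∉ H`), `H` does not stabilize any point of `(0,1)`, and `H·[F,F] = F`. -/
theorem stmt15 :
    H15 < F ∧ x 1 ∉ H15 ∧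
    (∀ (α : ℝ) (h0 : 0 < α) (h1 : α < 1), ∃ h ∈ H15,
      h ⟨α, Set.mem_Icc.mpr ⟨h0.le, h1.le⟩⟩ ≠ ⟨α, Set.mem_Icc.mpr ⟨h0.le, h1.le⟩⟩) ∧
    H15 ⊔ ⁅F, F⁆ = F := by
  have hsub := H15_le_F
  have hx1F := x_mem_F 1
  refine ⟨hsub.lt_of_ne fun hEq => x1_notin_H15 (hEq.symm ▸ hx1F), x1_notin_H15, ?_, ?_⟩
  · intro α h0 h1
    refine ⟨x 0, Subgroup.subset_closure (Set.mem_insert _ _), ?_⟩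
    rw [x0_eq]
    intro hEq
    have hv : x0fun α = α := congrArg Subtype.val hEq
    rcases le_or_gt α (1/4) with hc | hc
    · rw [x0fun_1 hc] at hv; linarith
    rcases le_or_gt α (1/2) with hc2 | hc2
    · rw [x0fun_2 hc hc2] at hv; linarith
    · rw [x0fun_3 hc2] at hv; linarith
  · apply le_antisymm
    · refine sup_le hsub (Subgroup.commutator_le.2 fun g1 hg1 g2 hg2 => ?_)
      rw [commutatorElement_def]
      exact mul_mem (mul_mem (mul_mem hg1 hg2) (inv_mem hg1)) (inv_mem hg2)
    · show Subgroup.closure {x 0, x 1} ≤ H15 ⊔ ⁅F,F⁆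
      apply (Subgroup.closure_le _).2
      rintro g (rfl | rfl)
      · exact (le_sup_left : H15 ≤ H15 ⊔ ⁅F,F⁆)
          (Subgroup.subset_closure (Set.mem_insert _ _))
      · have hh : (x 1)⁻¹ * x 2 * x 1 ∈ H15 :=
          Subgroup.subset_closure (Set.mem_insert_of_mem _ rfl)
        open scoped commutatorElement in
        have hcm : ⁅x 0, (x 1)⁻¹⁆ ∈ ⁅F, F⁆ :=
          Subgroup.commutator_mem_commutator (x_mem_F 0) (inv_mem (x_mem_F 1))
        open scoped commutatorElement in
        have key : x 1 = ⁅x 0, (x 1)⁻¹⁆ * ((x 1)⁻¹ * x 2 * x 1) := by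
          rw [x0_eq, x1_eq, x2_eq, commutatorElement_def]
          group
        rw [key]
        exact mul_mem ((le_sup_right : ⁅F,F⁆ ≤ H15 ⊔ ⁅F,F⁆) hcm)
          ((le_sup_left : H15 ≤ H15 ⊔ ⁅F,F⁆) hh)
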